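/- Let (X,d) be a separable metric space and let V be either the Euclidean space ℝ^m or the separable infinite-dimensional Hilbert space ℓ². Let D ≥ 1. Assume that for every finite subset Y ⊆ X there exists a non-contracting embedding f : Y → V with ‖f‖_Lip ≤ D. Then there exists a non-contracting embedding f : X → V with ‖f‖_Lip ≤ D. -/

import Mathlib

section
open Finset Submodule RealInnerProductSpace InnerProductSpace

private lemma norm_eq_of_inner {V : Type*} [NormedAddCommGroup V] [InnerProductSpace ℝ V]
    {x y : V} (h : ⟪x, x⟫ = ⟪y, y⟫) : ‖x‖ = ‖y‖ := by
  rw [← Real.sqrt_sq (norm_nonneg x), ← Real.sqrt_sq (norm_nonneg y),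
    ← real_inner_self_eq_norm_sq, ← real_inner_self_eq_norm_sq, h]

private lemma gram_transfer {V : Type*} [NormedAddCommGroup V] [InnerProductSpace ℝ V]
    (b : ℕ → V) (hb : Orthonormal ℝ b) (N : ℕ) (v : ℕ → V) :
    ∃ w : ℕ → V, (∀ i, i ≤ N → ∀ j, j ≤ N → ⟪w i, w j⟫ = ⟪v i, v j⟫) ∧
      ∀ i, w i ∈ Submodule.span ℝ (b '' Set.Iic i) := by
  classical
  set E : ℕ → V := gramSchmidtNormed ℝ v with hE
  have Forth : ∀ j l : ℕ, j ≠ l → ⟪E j, E l⟫ = 0 := by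
    intro j l hjl
    have h0 : ⟪gramSchmidt ℝ v j, gramSchmidt ℝ v l⟫ = 0 := gramSchmidt_orthogonal ℝ v hjl
    simp [hE, gramSchmidtNormed, real_inner_smul_left, real_inner_smul_right, h0]
  have F1 : ∀ i j : ℕ, i < j → ⟪E j, v i⟫ = 0 := by
    intro i j hij
    have hv : v i ∈ span ℝ (gramSchmidt ℝ v '' Set.Iic i) := mem_span_gramSchmidt ℝ v le_rfl
    have hle : span ℝ (gramSchmidt ℝ v '' Set.Iic i) ≤ (ℝ ∙ (E j))ᗮ := by
      rw [Submodule.span_le]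
      rintro x ⟨k, hk, rfl⟩
      rw [SetLike.mem_coe, Submodule.mem_orthogonal_singleton_iff_inner_right]
      have h0 : ⟪gramSchmidt ℝ v j, gramSchmidt ℝ v k⟫ = 0 :=
        gramSchmidt_orthogonal ℝ v (by simp only [Set.mem_Iic] at hk; omega)
      simp [hE, gramSchmidtNormed, real_inner_smul_left, h0]
    have := hle hv
    rwa [Submodule.mem_orthogonal_singleton_iff_inner_right] at this
  have Fdiag : ∀ m : ℕ, (⟪E m, E m⟫ : ℝ) • E m = E m := by
    intro m
    by_cases hm : E m = 0
    · simp [hm]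
    · rw [real_inner_self_eq_norm_sq, gramSchmidtNormed_unit_length' hm]
      norm_num
  have Frep : ∀ x, x ∈ span ℝ (E '' Set.Iic N) →
      x = ∑ j ∈ range (N + 1), ⟪E j, x⟫ • E j := by
    intro x hx
    induction hx using Submodule.span_induction with
    | mem x hx =>
      obtain ⟨m, hm, rfl⟩ := hx
      rw [Finset.sum_eq_single m]
      · rw [Fdiag]
      · intro j _ hj
        rw [Forth j m hj, zero_smul]
      · intro hm'
        exact absurd (Finset.mem_range.2 (by simp only [Set.mem_Iic] at hm; omega)) hm'
    | zero => simp
    | add x y hx hy ihx ihy =>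
      conv_lhs => rw [ihx, ihy]
      rw [← Finset.sum_add_distrib]
      refine Finset.sum_congr rfl fun j _ => ?_
      rw [inner_add_right, add_smul]
    | smul a x hx ihx =>
      conv_lhs => rw [ihx]
      rw [Finset.smul_sum]
      refine Finset.sum_congr rfl fun j _ => ?_
      rw [real_inner_smul_right, smul_smul]
  have Fpars : ∀ x y : V, y ∈ span ℝ (E '' Set.Iic N) →
      ⟪x, y⟫ = ∑ j ∈ range (N + 1), ⟪E j, y⟫ * ⟪x, E j⟫ := by
    intro x y hy
    conv_lhs => rw [Frep y hy]
    rw [inner_sum]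
    exact Finset.sum_congr rfl fun j _ => real_inner_smul_right _ _ _
  have hvmem : ∀ i : ℕ, i ≤ N → v i ∈ span ℝ (E '' Set.Iic N) := by
    intro i hi
    have h1 : v i ∈ span ℝ (gramSchmidt ℝ v '' Set.Iic i) := mem_span_gramSchmidt ℝ v le_rfl
    have h2 : span ℝ (gramSchmidt ℝ v '' Set.Iic i) = span ℝ (E '' Set.Iic i) :=
      (span_gramSchmidtNormed v _).symm
    rw [h2] at h1
    exact span_mono (Set.image_mono (Set.Iic_subset_Iic.2 hi)) h1
  refine ⟨fun i => if i ≤ N then ∑ j ∈ range (N + 1), ⟪E j, v i⟫ • b j else 0, ?_, ?_⟩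
  · intro i hi j hj
    simp only [if_pos hi, if_pos hj]
    have horth := orthonormal_iff_ite.mp hb
    rw [sum_inner]
    have hterm : ∀ l ∈ range (N + 1),
        ⟪(⟪E l, v i⟫ : ℝ) • b l, ∑ k ∈ range (N + 1), ⟪E k, v j⟫ • b k⟫
          = ⟪E l, v i⟫ * ⟪E l, v j⟫ := by
      intro l hl
      rw [real_inner_smul_left, inner_sum]
      have : ∀ k ∈ range (N + 1), ⟪b l, (⟪E k, v j⟫ : ℝ) • b k⟫
          = if l = k then ⟪E k, v j⟫ else 0 := by
        intro k _
        rw [real_inner_smul_right, horth l k]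
        split <;> simp
      rw [Finset.sum_congr rfl this, Finset.sum_ite_eq _ l (fun k => (⟪E k, v j⟫ : ℝ)), if_pos hl]
    rw [Finset.sum_congr rfl hterm, Fpars (v i) (v j) (hvmem j hj)]
    refine Finset.sum_congr rfl fun l _ => ?_
    rw [real_inner_comm (v i) (E l), mul_comm]
  · intro i
    by_cases hi : i ≤ N
    · simp only [if_pos hi]
      refine Submodule.sum_mem _ fun j _ => ?_
      by_cases hji : j ≤ i
      · exact Submodule.smul_mem _ _ (Submodule.subset_span ⟨j, Set.mem_Iic.2 hji, rfl⟩)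
      · rw [F1 i j (by omega), zero_smul]
        exact Submodule.zero_mem _
    · simp only [if_neg hi]
      exact Submodule.zero_mem _

private lemma exists_compacts {V : Type*} [NormedAddCommGroup V] [InnerProductSpace ℝ V]
    (hV : (∃ m : ℕ, Nonempty (V ≃ₗᵢ[ℝ] EuclideanSpace ℝ (Fin m))) ∨
      Nonempty (V ≃ₗᵢ[ℝ] lp (fun _ : ℕ => ℝ) 2))
    (r : ℕ → ℝ) (hr : ∀ i, 0 ≤ r i) :
    ∃ K : ℕ → Set V, (∀ i, IsCompact (K i)) ∧ (∀ i, (0 : V) ∈ K i) ∧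
      ∀ (N : ℕ) (v : ℕ → V), (∀ i, i ≤ N → ‖v i‖ ≤ r i) →
        ∃ w : ℕ → V, (∀ i, i ≤ N → ∀ j, j ≤ N → dist (w i) (w j) = dist (v i) (v j)) ∧
          ∀ i, w i ∈ K i := by
  rcases hV with ⟨m, em⟩ | el
  · obtain ⟨e⟩ := em
    haveI : FiniteDimensional ℝ V := e.symm.toLinearEquiv.finiteDimensional
    haveI : ProperSpace V := FiniteDimensional.proper ℝ V
    refine ⟨fun i => Metric.closedBall 0 (r i), fun i => isCompact_closedBall 0 (r i),
      fun i => Metric.mem_closedBall_self (hr i), ?_⟩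
    intro N v hv
    refine ⟨fun i => if i ≤ N then v i else 0, fun i hi j hj => by simp [if_pos hi, if_pos hj], ?_⟩
    intro i
    by_cases hi : i ≤ N
    · simp only [if_pos hi, Metric.mem_closedBall, dist_zero_right]
      exact hv i hi
    · simp only [if_neg hi]
      exact Metric.mem_closedBall_self (hr i)
  · obtain ⟨e⟩ := el
    let b : HilbertBasis ℕ ℝ V := HilbertBasis.ofRepr e
    have hb : Orthonormal ℝ (⇑b) := b.orthonormal
    haveI : ∀ i : ℕ, FiniteDimensional ℝ (Submodule.span ℝ ((⇑b) '' Set.Iic i)) := fun i =>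
      FiniteDimensional.span_of_finite ℝ ((Set.finite_Iic i).image _)
    refine ⟨fun i => Subtype.val ''
        (Metric.closedBall (0 : Submodule.span ℝ ((⇑b) '' Set.Iic i)) (r i)),
      fun i => (isCompact_closedBall _ _).image continuous_subtype_val,
      fun i => ⟨0, Metric.mem_closedBall_self (hr i), rfl⟩, ?_⟩
    intro N v hv
    obtain ⟨w', hw1, hw2⟩ := gram_transfer (⇑b) hb N v
    refine ⟨fun i => if i ≤ N then w' i else 0, ?_, ?_⟩
    · intro i hi j hj
      simp only [if_pos hi, if_pos hj]
      rw [dist_eq_norm, dist_eq_norm]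
      refine norm_eq_of_inner ?_
      rw [inner_sub_sub_self, inner_sub_sub_self, hw1 i hi i hi, hw1 i hi j hj, hw1 j hj i hi,
        hw1 j hj j hj]
    · intro i
      by_cases hi : i ≤ N
      · simp only [if_pos hi]
        have hnorm : ‖w' i‖ = ‖v i‖ := norm_eq_of_inner (hw1 i hi i hi)
        refine ⟨⟨w' i, hw2 i⟩, ?_, rfl⟩
        rw [Metric.mem_closedBall, dist_zero_right]
        show ‖(⟨w' i, hw2 i⟩ : Submodule.span ℝ ((⇑b) '' Set.Iic i))‖ ≤ r i
        rw [show ‖(⟨w' i, hw2 i⟩ : Submodule.span ℝ ((⇑b) '' Set.Iic i))‖ = ‖w' i‖ from rfl,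
          hnorm]
        exact hv i hi
      · simp only [if_neg hi]
        exact ⟨0, Metric.mem_closedBall_self (hr i), rfl⟩


theorem compactness_argument
    {X : Type*} [MetricSpace X] [TopologicalSpace.SeparableSpace X]
    (V : Type*) [NormedAddCommGroup V] [InnerProductSpace ℝ V]
    (hV : (∃ m : ℕ, Nonempty (V ≃ₗᵢ[ℝ] EuclideanSpace ℝ (Fin m))) ∨
      Nonempty (V ≃ₗᵢ[ℝ] lp (fun _ : ℕ => ℝ) 2))
    (D : ℝ) (hD : 1 ≤ D)
    (h : ∀ Y : Finset X, ∃ f : X → V, ∀ x ∈ Y, ∀ y ∈ Y,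
      dist x y ≤ dist (f x) (f y) ∧ dist (f x) (f y) ≤ D * dist x y) :
    ∃ f : X → V, ∀ x y : X,
      dist x y ≤ dist (f x) (f y) ∧ dist (f x) (f y) ≤ D * dist x y := by
  classical
  rcases isEmpty_or_nonempty X with hX | hX
  · exact ⟨fun _ => 0, fun x => (IsEmpty.false x).elim⟩
  have hD0 : (0 : ℝ) ≤ D := le_trans zero_le_one hD
  haveI hcV : CompleteSpace V := by
    rcases hV with ⟨m, ⟨e⟩⟩ | el
    · haveI : FiniteDimensional ℝ V := e.symm.toLinearEquiv.finiteDimensional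
      haveI : ProperSpace V := FiniteDimensional.proper ℝ V
      infer_instance
    · obtain ⟨e⟩ := el
      exact e.toIsometryEquiv.completeSpace
  set u : ℕ → X := TopologicalSpace.denseSeq X with hu
  have du : DenseRange u := TopologicalSpace.denseRange_denseSeq X
  set r : ℕ → ℝ := fun i => D * dist (u i) (u 0) with hrdef
  have hr : ∀ i, 0 ≤ r i := fun i => mul_nonneg hD0 dist_nonneg
  obtain ⟨K, hKc, hK0, hKw⟩ := exists_compacts hV r hr
  -- for each N, a good configuration
  have hH : ∀ N : ℕ, ∃ H : ℕ → V, (∀ i, H i ∈ K i) ∧ ∀ i, i ≤ N → ∀ j, j ≤ N →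
      dist (u i) (u j) ≤ dist (H i) (H j) ∧ dist (H i) (H j) ≤ D * dist (u i) (u j) := by
    intro N
    obtain ⟨f, hf⟩ := h ((Finset.range (N + 1)).image u)
    have hmem : ∀ i, i ≤ N → u i ∈ (Finset.range (N + 1)).image u := fun i hi =>
      Finset.mem_image_of_mem u (Finset.mem_range.2 (by omega))
    set v : ℕ → V := fun i => f (u i) - f (u 0) with hv
    have hdist : ∀ i j : ℕ, dist (v i) (v j) = dist (f (u i)) (f (u j)) := fun i j =>
      dist_sub_right _ _ _
    have hvb : ∀ i, i ≤ N → ‖v i‖ ≤ r i := by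
      intro i hi
      have h2 := (hf (u i) (hmem i hi) (u 0) (hmem 0 (Nat.zero_le N))).2
      calc ‖v i‖ = dist (f (u i)) (f (u 0)) := (dist_eq_norm _ _).symm
        _ ≤ D * dist (u i) (u 0) := h2
    obtain ⟨w, hw1, hw2⟩ := hKw N v hvb
    refine ⟨w, hw2, fun i hi j hj => ?_⟩
    rw [hw1 i hi j hj, hdist i j]
    exact hf (u i) (hmem i hi) (u j) (hmem j hj)
  choose H hHK hHb using hH
  -- ultrafilter limit
  set U : Ultrafilter ℕ := Ultrafilter.of Filter.atTop with hUdef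
  have hU : (U : Filter ℕ) ≤ Filter.atTop := Ultrafilter.of_le _
  have hlim : ∀ i : ℕ, ∃ g, g ∈ K i ∧
      Filter.Tendsto (fun N => H N i) (U : Filter ℕ) (nhds g) := by
    intro i
    obtain ⟨g, hg, hle⟩ := (hKc i).ultrafilter_le_nhds (U.map fun N => H N i)
      (by
        rw [Ultrafilter.coe_map, Filter.le_principal_iff, Filter.mem_map]
        exact Filter.univ_mem' fun N => hHK N i)
    refine ⟨g, hg, ?_⟩
    rwa [Ultrafilter.coe_map] at hle
  choose G hGK hGlim using hlim
  have hGb : ∀ i j : ℕ, dist (u i) (u j) ≤ dist (G i) (G j) ∧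
      dist (G i) (G j) ≤ D * dist (u i) (u j) := by
    intro i j
    have ht : Filter.Tendsto (fun N => dist (H N i) (H N j)) (U : Filter ℕ)
        (nhds (dist (G i) (G j))) := (hGlim i).dist (hGlim j)
    have hev : ∀ᶠ N in (U : Filter ℕ), i ≤ N ∧ j ≤ N :=
      hU ((Filter.eventually_ge_atTop i).and (Filter.eventually_ge_atTop j))
    constructor
    · exact ge_of_tendsto ht (hev.mono fun N hN => (hHb N i hN.1 j hN.2).1)
    · exact le_of_tendsto ht (hev.mono fun N hN => (hHb N i hN.1 j hN.2).2)
  -- extension to X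
  set A : Set X := Set.range u with hA
  have hAd : Dense A := du
  let ψ : A → V := fun a => G a.2.choose
  have hψ : ∀ a b : A, dist (a : X) (b : X) ≤ dist (ψ a) (ψ b) ∧
      dist (ψ a) (ψ b) ≤ D * dist (a : X) (b : X) := by
    intro a b
    have h1 := hGb a.2.choose b.2.choose
    rwa [a.2.choose_spec, b.2.choose_spec] at h1
  have hψuc : UniformContinuous ψ := by
    refine LipschitzWith.uniformContinuous (LipschitzWith.of_dist_le_mul (K := Real.toNNReal D)
      fun a b => ?_)
    rw [Real.coe_toNNReal D hD0, Subtype.dist_eq]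
    exact (hψ a b).2
  have hue : IsUniformInducing ((↑) : A → X) :=
    isUniformEmbedding_subtype_val.isUniformInducing
  have hdr : DenseRange ((↑) : A → X) := hAd.denseRange_val
  set f : X → V := (hue.isDenseInducing hdr).extend ψ with hf
  have hfc : Continuous f := (uniformContinuous_uniformly_extend hue hdr hψuc).continuous
  have hfa : ∀ a : A, f a = ψ a := fun a => uniformly_extend_of_ind hue hdr hψuc a
  refine ⟨f, fun x y => ?_⟩
  set s : Set (X × X) := {p : X × X | dist p.1 p.2 ≤ dist (f p.1) (f p.2) ∧
      dist (f p.1) (f p.2) ≤ D * dist p.1 p.2} with hs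
  have hclosed : IsClosed s := by
    have hc1 : Continuous fun p : X × X => dist p.1 p.2 := continuous_dist
    have hc2 : Continuous fun p : X × X => dist (f p.1) (f p.2) :=
      (hfc.comp continuous_fst).dist (hfc.comp continuous_snd)
    exact (isClosed_le hc1 hc2).inter (isClosed_le hc2 (continuous_const.mul hc1))
  have hsub : A ×ˢ A ⊆ s := by
    rintro ⟨x, y⟩ ⟨hx, hy⟩
    have h1 := hψ ⟨x, hx⟩ ⟨y, hy⟩
    constructor
    · simpa [hfa ⟨x, hx⟩, hfa ⟨y, hy⟩] using h1.1
    · simpa [hfa ⟨x, hx⟩, hfa ⟨y, hy⟩] using h1.2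
  have hdense : Dense (A ×ˢ A) := hAd.prod hAd
  have hcl : closure (A ×ˢ A) ⊆ s := closure_minimal hsub hclosed
  rw [hdense.closure_eq] at hcl
  exact hcl (Set.mem_univ (x, y))


end
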